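/- If (α, β) is a two-fold semi-morphism of a finite graph Γ, then for any two distinct vertices u, v of Γ, u is adjacent to v if and only if u^α = v^β or u^α is adjacent to v^β. -/
import Mathlib


def IsTF {V : Type*} (G : SimpleGraph V) (α β : Equiv.Perm V) : Prop :=
  ∀ u v : V, G.Adj u v → G.Adj (α u) (β v)

def IsTFS {V : Type*} (G : SimpleGraph V) (α β : Equiv.Perm V) : Prop :=
  (∀ u : V, G.Adj (α u) (β u)) ∧
    ∀ u v : V, G.Adj u v → G.Adj (α u) (β v) ∨ α u = β v

theorem stmt0 {V : Type*} [Fintype V] (G : SimpleGraph V) (α β : Equiv.Perm V)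
    (h : IsTFS G α β) :
    ∀ u v : V, u ≠ v → (G.Adj u v ↔ α u = β v ∨ G.Adj (α u) (β v)) := by
  intro u v huv
  set S : Set (V × V) := {p | p.1 = p.2 ∨ G.Adj p.1 p.2} with hS
  have hfin : S.Finite := Set.toFinite S
  set f : V × V → V × V := fun p => (α p.1, β p.2) with hf
  have hmaps : Set.MapsTo f S S := by
    rintro ⟨a, b⟩ (heq | hab)
    · simp only [hS, Set.mem_setOf_eq] at heq ⊢
      subst heq
      exact Or.inr (h.1 a)
    · rcases h.2 a b hab with h1 | h1
      · exact Or.inr h1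
      · exact Or.inl h1
  have hinj : Set.InjOn f S := by
    intro p _ q _ hpq
    simp only [hf, Prod.ext_iff] at hpq
    exact Prod.ext (α.injective hpq.1) (β.injective hpq.2)
  have hsurj := ((hfin.injOn_iff_bijOn_of_mapsTo hmaps).mp hinj).surjOn
  constructor
  · intro hadj
    rcases h.2 u v hadj with h1 | h1
    · exact Or.inr h1
    · exact Or.inl h1
  · intro hyp
    have hmem : (α u, β v) ∈ S := by
      rcases hyp with h1 | h1
      · exact Or.inl h1
      · exact Or.inr h1
    obtain ⟨⟨a, b⟩, hab, heq⟩ := hsurj hmem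
    simp only [hf, Prod.ext_iff] at heq
    obtain ⟨ha, hb⟩ := heq
    have ha' : a = u := α.injective ha
    have hb' : b = v := β.injective hb
    subst ha'; subst hb'
    rcases hab with h1 | h1
    · exact absurd h1 huv
    · exact h1
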